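/- Let λ > 0 and let x_f be a nonzero real fixed point of ζ_λ lying in (−1, 0) ∪ (√2, ∞). Then |ζ_λ'(x_f)| > 1, i.e. x_f is a repelling fixed point. -/

import Mathlib

/-- The real function `ζ_λ(x) = λ·x·e^{−x}/(x+1)`. -/
noncomputable def zeta (lam x : ℝ) : ℝ := lam * x * Real.exp (-x) / (x + 1)

theorem repelling_fixed_point (lam : ℝ) (hlam : 0 < lam) (xf : ℝ)
    (hxf : xf ∈ Set.Ioo (-1 : ℝ) 0 ∪ Set.Ioi (Real.sqrt 2)) (hfix : zeta lam xf = xf) :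
    1 < |deriv (zeta lam) xf| := by
  have hexp : (0:ℝ) < Real.exp (-xf) := Real.exp_pos _
  have hs2 : (0:ℝ) < Real.sqrt 2 := Real.sqrt_pos.2 (by norm_num)
  have hx1 : 0 < xf + 1 := by
    rcases hxf with h | h
    · linarith [h.1]
    · simp only [Set.mem_Ioi] at h; linarith
  have hx0 : xf ≠ 0 := by
    rcases hxf with h | h
    · exact ne_of_lt h.2
    · simp only [Set.mem_Ioi] at h; exact ne_of_gt (lt_trans hs2 h)
  have hx1' : xf + 1 ≠ 0 := ne_of_gt hx1
  have hd : HasDerivAt (zeta lam)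
      ((lam * (1 - xf) * Real.exp (-xf) * (xf + 1) - lam * xf * Real.exp (-xf) * 1)
        / (xf + 1) ^ 2) xf := by
    have he : HasDerivAt (fun x : ℝ => Real.exp (-x)) (-Real.exp (-xf)) xf := by
      simpa [Function.comp_def] using (Real.hasDerivAt_exp (-xf)).comp xf ((hasDerivAt_id xf).neg)
    have h1 : HasDerivAt (fun x : ℝ => lam * x * Real.exp (-x))
        (lam * (1 - xf) * Real.exp (-xf)) xf := by
      have := ((hasDerivAt_id xf).const_mul lam).fun_mul he
      simp only [id_eq] at this
      exact this.congr_deriv (by ring)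
    have h2 : HasDerivAt (fun x : ℝ => x + 1) 1 xf := (hasDerivAt_id xf).add_const 1
    exact h1.div h2 hx1'
  have hderiv := hd.deriv
  have hlamexp : lam * Real.exp (-xf) = xf + 1 := by
    have h := hfix
    unfold zeta at h
    rw [div_eq_iff hx1'] at h
    have h2 : xf * (lam * Real.exp (-xf) - (xf + 1)) = 0 := by linear_combination h
    rcases mul_eq_zero.1 h2 with h3 | h3
    · exact absurd h3 hx0
    · linarith
  have hval : deriv (zeta lam) xf = (1 - xf - xf ^ 2) / (xf + 1) := by
    rw [hderiv]
    rw [div_eq_div_iff (by positivity) hx1']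
    linear_combination ((xf + 1) * ((1 - xf) * (xf + 1) - xf)) * hlamexp
  rw [hval]
  rcases hxf with h | h
  · have hnum : 0 < 1 - xf - xf ^ 2 := by nlinarith [h.1, h.2]
    rw [abs_of_pos (div_pos hnum hx1), lt_div_iff₀ hx1]
    nlinarith [h.1, h.2]
  · simp only [Set.mem_Ioi] at h
    have hsq : xf ^ 2 > 2 := by
      nlinarith [Real.sq_sqrt (by norm_num : (2:ℝ) ≥ 0), h, Real.sqrt_nonneg 2]
    have hnum : 1 - xf - xf ^ 2 < 0 := by nlinarith
    rw [abs_of_neg (div_neg_of_neg_of_pos hnum hx1), lt_neg, div_lt_iff₀ hx1]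
    nlinarith
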